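/- Let φ_p : ℝⁿ → ℝ be convex and differentiable, and suppose u∞ is a fixed point of the modifier-adaptation iteration: u∞ minimizes the modified model m(u) = φ_p̂(u) + λᵀu over ℝⁿ, where λ = ∇φ_p(u∞) − ∇φ_p̂(u∞) and φ_p̂ is differentiable. Then u∞ is a global minimizer of φ_p. -/

import Mathlib

open scoped RealInnerProductSpace

theorem stmt_15 {n : ℕ}
    (φp φph : EuclideanSpace ℝ (Fin n) → ℝ)
    (hconv : ConvexOn ℝ Set.univ φp)
    (hφp : Differentiable ℝ φp) (hφph : Differentiable ℝ φph)
    (uinf : EuclideanSpace ℝ (Fin n))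
    (lam : EuclideanSpace ℝ (Fin n))
    (hlam : lam = gradient φp uinf - gradient φph uinf)
    (m : EuclideanSpace ℝ (Fin n) → ℝ)
    (hm : m = fun u => φph u + ⟪lam, u⟫)
    (hmin : ∀ u, m uinf ≤ m u) :
    ∀ u, φp uinf ≤ φp u := by
  -- m is differentiable
  have hinner : ∀ x, HasFDerivAt (fun u : EuclideanSpace ℝ (Fin n) => ⟪lam, u⟫)
      (innerSL ℝ lam) x := fun x => (innerSL ℝ lam).hasFDerivAt
  have hmderiv : ∀ x, HasFDerivAt m (fderiv ℝ φph x + innerSL ℝ lam) x := by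
    intro x
    rw [hm]
    exact ((hφph x).hasFDerivAt).add (hinner x)
  -- local min ⇒ derivative zero
  have hlocmin : IsLocalMin m uinf := by
    apply Filter.Eventually.of_forall
    intro x; exact hmin x
  have hz : fderiv ℝ m uinf = 0 := hlocmin.fderiv_eq_zero
  have hz' : fderiv ℝ φph uinf + innerSL ℝ lam = 0 := by
    rw [← (hmderiv uinf).fderiv]; exact hz
  -- gradient φp uinf = 0
  have hgrad : gradient φp uinf = 0 := by
    have hd : (InnerProductSpace.toDual ℝ (EuclideanSpace ℝ (Fin n))).symm ((innerSL ℝ) lam) = lam := by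
      apply (InnerProductSpace.toDual ℝ (EuclideanSpace ℝ (Fin n))).symm_apply_eq.mpr
      rfl
    have h1 : gradient φph uinf + lam = 0 := by
      have := congrArg (InnerProductSpace.toDual ℝ (EuclideanSpace ℝ (Fin n))).symm hz'
      simpa [gradient, map_add, hd] using this
    rw [hlam] at h1
    have h2 : gradient φph uinf + (gradient φp uinf - gradient φph uinf) = gradient φp uinf := by abel
    rw [h2] at h1
    exact h1
  have hfz : fderiv ℝ φp uinf = 0 := by
    have : (InnerProductSpace.toDual ℝ (EuclideanSpace ℝ (Fin n)))
        (gradient φp uinf) = fderiv ℝ φp uinf := by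
      simp [gradient]
    rw [← this, hgrad, map_zero]
  -- convexity: critical point is global min
  intro u
  set v := u - uinf with hv
  -- g t = φp (uinf + t • v)
  set g : ℝ → ℝ := fun t => φp (uinf + t • v) with hg
  have hline : ∀ t : ℝ, HasDerivAt (fun s : ℝ => uinf + s • v) v t := by
    intro t
    simpa using ((hasDerivAt_id t).smul_const v).const_add uinf
  have hgd : HasDerivAt g 0 0 := by
    have := (hφp (uinf + (0:ℝ) • v)).hasFDerivAt.comp_hasDerivAt 0 (hline 0)
    simp [hfz] at this
    exact this
  -- slope bound from convexity
  have hslope : ∀ t ∈ Set.Ioo (0:ℝ) 1, slope g 0 t ≤ φp u - φp uinf := by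
    intro t ht
    have hc := hconv.2 (Set.mem_univ uinf) (Set.mem_univ u)
      (by linarith [ht.1, ht.2] : (0:ℝ) ≤ 1 - t) (le_of_lt ht.1) (by ring)
    have harg : (1 - t) • uinf + t • u = uinf + t • v := by
      rw [hv]; module
    rw [harg] at hc
    have hgt : g t ≤ (1 - t) * φp uinf + t * φp u := by
      simpa [hg, smul_eq_mul] using hc
    rw [slope_def_field]
    have hg0 : g 0 = φp uinf := by simp [hg]
    rw [hg0, sub_zero, div_le_iff₀ ht.1]
    nlinarith [ht.1]
  -- take the limit t → 0+
  have htend : Filter.Tendsto (slope g 0) (nhdsWithin 0 (Set.Ioi 0)) (nhds 0) := by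
    have := hasDerivAt_iff_tendsto_slope.mp hgd
    exact this.mono_left (nhdsWithin_mono 0 (fun x hx => ne_of_gt hx))
  have hev : ∀ᶠ t in nhdsWithin 0 (Set.Ioi (0:ℝ)), slope g 0 t ≤ φp u - φp uinf := by
    filter_upwards [Ioo_mem_nhdsGT_of_mem (Set.left_mem_Ico.mpr one_pos)] with t ht
    exact hslope t ht
  have : (0:ℝ) ≤ φp u - φp uinf := le_of_tendsto htend hev
  linarith
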